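/- Fix α ∈ (0,1), T > 0 and F ≥ 0. There exists a constant C = C(α,T) > 0 with the following property. Let H be a real inner product space, N ≥ 1 an integer and Δt = T/N. Suppose u⁰, u¹, …, u^N ∈ H, for each n ∈ {1,…,N} a bilinear form aₙ : H × H → ℝ with aₙ(v,v) ≥ 0 for all v ∈ H, and elements gⁿ ∈ H with ‖gⁿ‖ ≤ F, satisfy ⟨δᵅuⁿ, v⟩ + aₙ(uⁿ, v) = ⟨gⁿ, v⟩ for all v ∈ H and all n ∈ {1,…,N}. Then ‖uⁿ‖ ≤ C(‖u⁰‖ + F) for all n ∈ {0,…,N}. -/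

import Mathlib

open RealInnerProductSpace

/-- The L1 weights `b_j(β) = j^β - (j-1)^β`. -/
noncomputable def bcoef (β : ℝ) (j : ℕ) : ℝ := (j : ℝ) ^ β - ((j : ℝ) - 1) ^ β

/-- The L1 discretization of the Caputo derivative of order `α` with time step `Δt`,
applied to a sequence `y` in a real vector space, evaluated at step `n`:
`δᵅyⁿ = ((Δt)^{−α}/Γ(2−α)) Σ_{i=0}^{n−1} b_{n−i}(1−α)(y^{i+1} − yⁱ)`. -/
noncomputable def L1delta {H : Type*} [AddCommGroup H] [Module ℝ H]
    (α Δt : ℝ) (y : ℕ → H) (n : ℕ) : H :=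
  (Δt ^ (-α) / Real.Gamma (2 - α)) •
    ∑ i ∈ Finset.range n, bcoef (1 - α) (n - i) • (y (i + 1) - y i)

lemma bcoef_pos {β : ℝ} (hβ : 0 < β) {j : ℕ} (hj : 1 ≤ j) : 0 < bcoef β j := by
  have h1 : (1:ℝ) ≤ (j:ℝ) := by exact_mod_cast hj
  have := Real.rpow_lt_rpow (by linarith : (0:ℝ) ≤ (j:ℝ) - 1)
    (by linarith : (j:ℝ) - 1 < (j:ℝ)) hβ
  unfold bcoef; linarith

lemma bcoef_one {β : ℝ} (hβ : 0 < β) : bcoef β 1 = 1 := by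
  simp [bcoef, Real.zero_rpow hβ.ne']

lemma bcoef_succ_le {β : ℝ} (hβ0 : 0 < β) (hβ1 : β < 1) {j : ℕ} (hj : 1 ≤ j) :
    bcoef β (j + 1) ≤ bcoef β j := by
  have h1 : (1:ℝ) ≤ (j:ℝ) := by exact_mod_cast hj
  have hcon := (Real.strictConcaveOn_rpow hβ0 hβ1).concaveOn
  have hx : ((j:ℝ) - 1) ∈ Set.Ici (0:ℝ) := by simp; linarith
  have hy : ((j:ℝ) + 1) ∈ Set.Ici (0:ℝ) := by simp; linarith
  have := hcon.2 hx hy (by norm_num : (0:ℝ) ≤ 1/2) (by norm_num : (0:ℝ) ≤ 1/2) (by norm_num)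
  have hmid : (1/2 : ℝ) • ((j:ℝ) - 1) + (1/2 : ℝ) • ((j:ℝ) + 1) = (j:ℝ) := by
    simp [smul_eq_mul]; ring
  rw [hmid] at this
  simp only [smul_eq_mul] at this
  unfold bcoef
  push_cast
  have : ((j:ℝ) - 1) ^ β + ((j:ℝ) + 1) ^ β ≤ 2 * (j:ℝ) ^ β := by linarith
  have heq : (j:ℝ) + 1 - 1 = (j:ℝ) := by ring
  rw [heq]
  linarith

lemma bcoef_anti {β : ℝ} (hβ0 : 0 < β) (hβ1 : β < 1) {i n : ℕ} (hi : 1 ≤ i) (hin : i ≤ n) :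
    bcoef β n ≤ bcoef β i := by
  induction n, hin using Nat.le_induction with
  | base => exact le_rfl
  | succ n hn ih => exact le_trans (bcoef_succ_le hβ0 hβ1 (le_trans hi hn)) ih

lemma bcoef_lower {β : ℝ} (hβ0 : 0 < β) (hβ1 : β < 1) {n : ℕ} (hn : 1 ≤ n) :
    β * (n:ℝ) ^ (β - 1) ≤ bcoef β n := by
  have h1 : (1:ℝ) ≤ (n:ℝ) := by exact_mod_cast hn
  have hab : (n:ℝ) - 1 < (n:ℝ) := by linarith
  have hcont : ContinuousOn (fun x : ℝ => x ^ β) (Set.Icc ((n:ℝ) - 1) (n:ℝ)) :=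
    fun x _ => (Real.continuousAt_rpow_const x β (Or.inr hβ0.le)).continuousWithinAt
  have hderiv : ∀ x ∈ Set.Ioo ((n:ℝ) - 1) (n:ℝ),
      HasDerivAt (fun x : ℝ => x ^ β) (β * x ^ (β - 1)) x := by
    intro x hx
    have hx0 : 0 < x := lt_of_le_of_lt (by linarith [hx.1] : (0:ℝ) ≤ (n:ℝ) - 1) hx.1
    simpa using Real.hasDerivAt_rpow_const (Or.inl hx0.ne')
  obtain ⟨c, hc, hceq⟩ := exists_hasDerivAt_eq_slope (fun x : ℝ => x ^ β)
    (fun x => β * x ^ (β - 1)) hab hcont hderiv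
  have hc0 : 0 < c := lt_of_le_of_lt (by linarith : (0:ℝ) ≤ (n:ℝ) - 1) hc.1
  have hcn : c ≤ (n:ℝ) := hc.2.le
  have hmono : (n:ℝ) ^ (β - 1) ≤ c ^ (β - 1) :=
    Real.rpow_le_rpow_of_nonpos hc0 hcn (by linarith)
  have : bcoef β n = β * c ^ (β - 1) := by
    unfold bcoef
    have : ((n:ℝ) - ((n:ℝ) - 1)) = 1 := by ring
    rw [eq_comm]
    field_simp at hceq
    linarith [hceq]
  rw [this]
  nlinarith [hβ0]

lemma abel_sum {H : Type} [AddCommGroup H] [Module ℝ H] (β : ℝ) (hβ : 0 < β)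
    (u : ℕ → H) {n : ℕ} (hn : 1 ≤ n) :
    ∑ i ∈ Finset.range n, bcoef β (n - i) • (u (i + 1) - u i)
      = u n - bcoef β n • u 0
        - ∑ j ∈ Finset.Ico 1 n, (bcoef β (n - j) - bcoef β (n - j + 1)) • u j := by
  have h1 : ∑ i ∈ Finset.range n, bcoef β (n - i) • (u (i + 1) - u i)
      = (∑ i ∈ Finset.range n, bcoef β (n - i) • u (i + 1))
        - ∑ i ∈ Finset.range n, bcoef β (n - i) • u i := by
    rw [← Finset.sum_sub_distrib]
    exact Finset.sum_congr rfl fun i _ => smul_sub _ _ _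
  have h2 : ∑ j ∈ Finset.Ico 1 (n + 1), bcoef β (n + 1 - j) • u j
      = ∑ i ∈ Finset.range n, bcoef β (n - i) • u (i + 1) := by
    rw [Finset.sum_Ico_eq_sum_range]
    have hnn : n + 1 - 1 = n := by omega
    rw [hnn]
    refine Finset.sum_congr rfl fun i hi => ?_
    have e1 : n + 1 - (1 + i) = n - i := by omega
    have e2 : 1 + i = i + 1 := by omega
    rw [e1, e2]
  have h3 : ∑ j ∈ Finset.Ico 1 (n + 1), bcoef β (n + 1 - j) • u j
      = (∑ j ∈ Finset.Ico 1 n, bcoef β (n + 1 - j) • u j) + u n := by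
    rw [Finset.sum_Ico_succ_top (by omega : 1 ≤ n)]
    congr 1
    rw [Nat.add_sub_cancel_left, bcoef_one hβ, one_smul]
  have h4 : ∑ i ∈ Finset.range n, bcoef β (n - i) • u i
      = bcoef β n • u 0 + ∑ j ∈ Finset.Ico 1 n, bcoef β (n - j) • u j := by
    rw [Finset.range_eq_Ico, Finset.sum_eq_sum_Ico_succ_bot (by omega : 0 < n)]
    simp
  rw [h1, ← h2, h3, h4]
  have h5 : ∑ j ∈ Finset.Ico 1 n, (bcoef β (n - j) - bcoef β (n - j + 1)) • u j
      = (∑ j ∈ Finset.Ico 1 n, bcoef β (n - j) • u j)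
        - ∑ j ∈ Finset.Ico 1 n, bcoef β (n + 1 - j) • u j := by
    rw [← Finset.sum_sub_distrib]
    refine Finset.sum_congr rfl fun j hj => ?_
    have hj' := Finset.mem_Ico.1 hj
    rw [sub_smul]
    congr 3
    omega
  rw [h5]
  abel

lemma coef_telescope (β : ℝ) {n : ℕ} (hn : 1 ≤ n) :
    ∑ j ∈ Finset.Ico 1 n, (bcoef β (n - j) - bcoef β (n - j + 1))
      = bcoef β 1 - bcoef β n := by
  have h1 : ∑ j ∈ Finset.Ico 1 n, (bcoef β (n - j) - bcoef β (n - j + 1))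
      = ∑ k ∈ Finset.Ico 1 n, (bcoef β k - bcoef β (k + 1)) := by
    refine Finset.sum_nbij' (fun j => n - j) (fun k => n - k) ?_ ?_ ?_ ?_ ?_
    · intro a ha; simp only [Finset.mem_Ico] at ha ⊢; omega
    · intro a ha; simp only [Finset.mem_Ico] at ha ⊢; omega
    · intro a ha; simp only [Finset.mem_Ico] at ha; omega
    · intro a ha; simp only [Finset.mem_Ico] at ha; omega
    · intro a ha; rfl
  rw [h1, Finset.sum_Ico_eq_sum_range]
  have h2 : ∀ i, bcoef β (1 + i) - bcoef β (1 + i + 1)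
      = (fun k => bcoef β (k + 1)) i - (fun k => bcoef β (k + 1)) (i + 1) := by
    intro i; simp only []; congr 2 <;> omega
  calc ∑ i ∈ Finset.range (n - 1), (bcoef β (1 + i) - bcoef β (1 + i + 1))
      = ∑ i ∈ Finset.range (n - 1),
          ((fun k => bcoef β (k + 1)) i - (fun k => bcoef β (k + 1)) (i + 1)) :=
        Finset.sum_congr rfl fun i _ => h2 i
    _ = bcoef β (0 + 1) - bcoef β ((n - 1) + 1) := Finset.sum_range_sub' _ _
    _ = bcoef β 1 - bcoef β n := by congr 2; omega


set_option maxHeartbeats 2000000 in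
/-- Stability of the fully discrete L1–Galerkin scheme (paper's Theorem 1, abstract form). -/
theorem stmt_0 (α T : ℝ) (hα : α ∈ Set.Ioo (0 : ℝ) 1) (hT : 0 < T) :
    ∃ C : ℝ, 0 < C ∧
      ∀ (F : ℝ), 0 ≤ F →
      ∀ (H : Type) [NormedAddCommGroup H] [InnerProductSpace ℝ H],
      ∀ (N : ℕ), 1 ≤ N →
      ∀ (u g : ℕ → H) (a : ℕ → H →ₗ[ℝ] H →ₗ[ℝ] ℝ),
        (∀ n, n ∈ Finset.Icc 1 N → ∀ v : H, 0 ≤ a n v v) →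
        (∀ n, n ∈ Finset.Icc 1 N → ‖g n‖ ≤ F) →
        (∀ n, n ∈ Finset.Icc 1 N → ∀ v : H,
          ⟪L1delta α (T / (N : ℝ)) u n, v⟫ + a n (u n) v = ⟪g n, v⟫) →
        ∀ n, n ≤ N → ‖u n‖ ≤ C * (‖u 0‖ + F) := by
  obtain ⟨hα0, hα1⟩ := hα
  have hβ0 : 0 < 1 - α := by linarith
  have hβ1 : 1 - α < 1 := by linarith
  have hΓ : 0 < Real.Gamma (2 - α) := Real.Gamma_pos_of_pos (by linarith)
  have hTα : 0 < T ^ α := Real.rpow_pos_of_pos hT α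
  have hG0 : 0 ≤ Real.Gamma (2 - α) * T ^ α / (1 - α) :=
    le_of_lt (div_pos (mul_pos hΓ hTα) hβ0)
  refine ⟨1 + Real.Gamma (2 - α) * T ^ α / (1 - α), by linarith, ?_⟩
  intro F hF H _ _ N hN u g a ha hg hsch
  set Δt : ℝ := T / (N : ℝ) with hΔtdef
  have hN0 : (0 : ℝ) < (N : ℝ) := by exact_mod_cast Nat.lt_of_lt_of_le Nat.zero_lt_one hN
  have hΔt0 : 0 < Δt := div_pos hT hN0
  have hκ0 : 0 < Δt ^ (-α) / Real.Gamma (2 - α) :=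
    div_pos (Real.rpow_pos_of_pos hΔt0 _) hΓ
  set E : ℝ := F * Real.Gamma (2 - α) * Δt ^ α with hEdef
  have hΔtα : 0 < Δt ^ α := Real.rpow_pos_of_pos hΔt0 α
  have hE0 : 0 ≤ E := mul_nonneg (mul_nonneg hF hΓ.le) hΔtα.le
  have hκE : Δt ^ (-α) / Real.Gamma (2 - α) * E = F := by
    rw [hEdef, Real.rpow_neg hΔt0.le]
    field_simp
  -- key induction
  have key : ∀ n, n ≤ N → 1 ≤ n → ‖u n‖ ≤ ‖u 0‖ + E / bcoef (1 - α) n := by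
    intro n
    induction n using Nat.strong_induction_on with
    | _ n IH =>
    intro hnN hn1
    have hbn : 0 < bcoef (1 - α) n := bcoef_pos hβ0 hn1
    have hX0 : 0 ≤ ‖u 0‖ + E / bcoef (1 - α) n :=
      add_nonneg (norm_nonneg _) (div_nonneg hE0 hbn.le)
    have hmem : n ∈ Finset.Icc 1 N := Finset.mem_Icc.2 ⟨hn1, hnN⟩
    have hga : ⟪L1delta α Δt u n, u n⟫ ≤ F * ‖u n‖ := by
      have h1 : ⟪g n, u n⟫ ≤ ‖g n‖ * ‖u n‖ := real_inner_le_norm _ _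
      have h2 := ha n hmem (u n)
      have h3 := hg n hmem
      have h4 := hsch n hmem (u n)
      nlinarith [norm_nonneg (u n)]
    have hinner : ⟪L1delta α Δt u n, u n⟫
        = (Δt ^ (-α) / Real.Gamma (2 - α)) *
            (⟪u n, u n⟫ - bcoef (1 - α) n * ⟪u 0, u n⟫
              - ∑ j ∈ Finset.Ico 1 n,
                  (bcoef (1 - α) (n - j) - bcoef (1 - α) (n - j + 1)) * ⟪u j, u n⟫) := by
      unfold L1delta
      rw [abel_sum (1 - α) hβ0 u hn1, real_inner_smul_left]
      congr 1
      rw [inner_sub_left, inner_sub_left, real_inner_smul_left, sum_inner]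
      congr 1
      exact Finset.sum_congr rfl fun j _ => real_inner_smul_left _ _ _
    have hsum_le : ∑ j ∈ Finset.Ico 1 n,
          (bcoef (1 - α) (n - j) - bcoef (1 - α) (n - j + 1)) * ⟪u j, u n⟫
        ≤ (1 - bcoef (1 - α) n) * ((‖u 0‖ + E / bcoef (1 - α) n) * ‖u n‖) := by
      have hterm : ∀ j ∈ Finset.Ico 1 n,
          (bcoef (1 - α) (n - j) - bcoef (1 - α) (n - j + 1)) * ⟪u j, u n⟫
          ≤ (bcoef (1 - α) (n - j) - bcoef (1 - α) (n - j + 1)) *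
              ((‖u 0‖ + E / bcoef (1 - α) n) * ‖u n‖) := by
        intro j hj
        obtain ⟨hj1, hjn⟩ := Finset.mem_Ico.1 hj
        have hc : 0 ≤ bcoef (1 - α) (n - j) - bcoef (1 - α) (n - j + 1) := by
          have h := bcoef_succ_le hβ0 hβ1 (show 1 ≤ n - j by omega)
          have e : n - j + 1 = (n - j) + 1 := rfl
          rw [e]; linarith
        apply mul_le_mul_of_nonneg_left _ hc
        have h1 : ⟪u j, u n⟫ ≤ ‖u j‖ * ‖u n‖ := real_inner_le_norm _ _
        have hbj : 0 < bcoef (1 - α) j := bcoef_pos hβ0 hj1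
        have h4 : bcoef (1 - α) n ≤ bcoef (1 - α) j := bcoef_anti hβ0 hβ1 hj1 (le_of_lt hjn)
        have h5 : E / bcoef (1 - α) j ≤ E / bcoef (1 - α) n := by gcongr
        have h3 := IH j hjn (le_trans (le_of_lt hjn) hnN) hj1
        have h2 : ‖u j‖ ≤ ‖u 0‖ + E / bcoef (1 - α) n := by linarith
        nlinarith [norm_nonneg (u n), norm_nonneg (u j)]
      calc ∑ j ∈ Finset.Ico 1 n,
            (bcoef (1 - α) (n - j) - bcoef (1 - α) (n - j + 1)) * ⟪u j, u n⟫
          ≤ ∑ j ∈ Finset.Ico 1 n,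
            (bcoef (1 - α) (n - j) - bcoef (1 - α) (n - j + 1)) *
              ((‖u 0‖ + E / bcoef (1 - α) n) * ‖u n‖) := Finset.sum_le_sum hterm
        _ = (∑ j ∈ Finset.Ico 1 n,
              (bcoef (1 - α) (n - j) - bcoef (1 - α) (n - j + 1))) *
              ((‖u 0‖ + E / bcoef (1 - α) n) * ‖u n‖) := (Finset.sum_mul _ _ _).symm
        _ = (1 - bcoef (1 - α) n) * ((‖u 0‖ + E / bcoef (1 - α) n) * ‖u n‖) := by
              rw [coef_telescope (1 - α) hn1, bcoef_one hβ0]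
    rcases eq_or_lt_of_le (norm_nonneg (u n)) with h0 | h0
    · rw [← h0]; exact hX0
    · have e1 : ⟪u n, u n⟫ = ‖u n‖ ^ 2 := real_inner_self_eq_norm_sq _
      have e2 : ⟪u 0, u n⟫ ≤ ‖u 0‖ * ‖u n‖ := real_inner_le_norm _ _
      have hlow : (Δt ^ (-α) / Real.Gamma (2 - α)) *
          (‖u n‖ ^ 2 - bcoef (1 - α) n * (‖u 0‖ * ‖u n‖)
            - (1 - bcoef (1 - α) n) * ((‖u 0‖ + E / bcoef (1 - α) n) * ‖u n‖))
          ≤ (Δt ^ (-α) / Real.Gamma (2 - α)) * E * ‖u n‖ := by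
        have hmid : (Δt ^ (-α) / Real.Gamma (2 - α)) *
            (‖u n‖ ^ 2 - bcoef (1 - α) n * (‖u 0‖ * ‖u n‖)
              - (1 - bcoef (1 - α) n) * ((‖u 0‖ + E / bcoef (1 - α) n) * ‖u n‖))
            ≤ ⟪L1delta α Δt u n, u n⟫ := by
          rw [hinner]
          apply mul_le_mul_of_nonneg_left _ hκ0.le
          have := mul_le_mul_of_nonneg_left e2 hbn.le
          rw [e1]
          linarith
        calc _ ≤ ⟪L1delta α Δt u n, u n⟫ := hmid
          _ ≤ F * ‖u n‖ := hga
          _ = (Δt ^ (-α) / Real.Gamma (2 - α)) * E * ‖u n‖ := by rw [hκE]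
      have hdiv : ‖u n‖ ^ 2 - bcoef (1 - α) n * (‖u 0‖ * ‖u n‖)
          - (1 - bcoef (1 - α) n) * ((‖u 0‖ + E / bcoef (1 - α) n) * ‖u n‖)
          ≤ E * ‖u n‖ := by
        rw [mul_assoc] at hlow
        exact le_of_mul_le_mul_left hlow hκ0
      have hcancel : bcoef (1 - α) n * (E / bcoef (1 - α) n) = E := by
        field_simp
      nlinarith [h0]
  -- conclude
  intro n hnN
  rcases Nat.eq_zero_or_pos n with rfl | hn1
  · nlinarith [norm_nonneg (u 0)]
  · have hk := key n hnN hn1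
    have hbn := bcoef_pos hβ0 hn1
    have hn0 : (0 : ℝ) < (n : ℝ) := by exact_mod_cast hn1
    have hnα : 0 < (n : ℝ) ^ α := Real.rpow_pos_of_pos hn0 α
    have hlow : (1 - α) * (n : ℝ) ^ ((1 - α) - 1) ≤ bcoef (1 - α) n :=
      bcoef_lower hβ0 hβ1 hn1
    have hexp : (n : ℝ) ^ ((1 - α) - 1) = ((n : ℝ) ^ α)⁻¹ := by
      rw [show (1 - α) - 1 = -α by ring, Real.rpow_neg hn0.le]
    rw [hexp] at hlow
    have hden : 0 < (1 - α) * ((n : ℝ) ^ α)⁻¹ :=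
      mul_pos hβ0 (inv_pos.2 hnα)
    have h1 : E / bcoef (1 - α) n ≤ E / ((1 - α) * ((n : ℝ) ^ α)⁻¹) := by gcongr
    have h2 : E / ((1 - α) * ((n : ℝ) ^ α)⁻¹) = E * (n : ℝ) ^ α / (1 - α) := by
      field_simp
    have hΔtn : Δt * (n : ℝ) ≤ T := by
      rw [hΔtdef, div_mul_eq_mul_div, div_le_iff₀ hN0]
      have : (n : ℝ) ≤ (N : ℝ) := by exact_mod_cast hnN
      nlinarith
    have h3 : Δt ^ α * (n : ℝ) ^ α ≤ T ^ α := by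
      rw [← Real.mul_rpow hΔt0.le hn0.le]
      exact Real.rpow_le_rpow (by positivity) hΔtn hα0.le
    have h4 : E * (n : ℝ) ^ α ≤ F * Real.Gamma (2 - α) * T ^ α := by
      rw [hEdef]
      calc F * Real.Gamma (2 - α) * Δt ^ α * (n : ℝ) ^ α
          = F * Real.Gamma (2 - α) * (Δt ^ α * (n : ℝ) ^ α) := by ring
        _ ≤ F * Real.Gamma (2 - α) * T ^ α := by
            apply mul_le_mul_of_nonneg_left h3 (mul_nonneg hF hΓ.le)
    have h5 : E / bcoef (1 - α) n ≤ F * Real.Gamma (2 - α) * T ^ α / (1 - α) := by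
      rw [h2] at h1
      calc E / bcoef (1 - α) n ≤ E * (n : ℝ) ^ α / (1 - α) := h1
        _ ≤ F * Real.Gamma (2 - α) * T ^ α / (1 - α) := by gcongr
    have h6 : F * Real.Gamma (2 - α) * T ^ α / (1 - α)
        = F * (Real.Gamma (2 - α) * T ^ α / (1 - α)) := by ring
    nlinarith [norm_nonneg (u 0), norm_nonneg (u n)]
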